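/- From an ε-simple set to a simple set: let S ⊆ V × {1,2} be an ε-simple set with 0 ≤ ε < 1, let P = {u_1, u_2 : u ∈ V, u_1 ∈ S and u_2 ∈ S}, and let S' = S ∖ P. Then Φ(S') ≤ (Φ(S) + ε)/(1 − ε). -/

import Mathlib

open Finset

/-- The volume of a vertex set: the sum of the degrees of its vertices. -/
noncomputable def gVol {V : Type*} (deg : V → ℝ) (S : Finset V) : ℝ := ∑ u ∈ S, deg u

/-- The total edge weight between two vertex sets. -/
noncomputable def gCut {V : Type*} (w : V → V → ℝ) (A B : Finset V) : ℝ :=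
  ∑ u ∈ A, ∑ v ∈ B, w u v

/-- The conductance `Φ(T) = w(T, Tᶜ)/vol(T)` of a vertex set. -/
noncomputable def gCondVol {V : Type*} [Fintype V] [DecidableEq V]
    (w : V → V → ℝ) (deg : V → ℝ) (T : Finset V) : ℝ :=
  gCut w T Tᶜ / gVol deg T

/-- **From an ε-simple set to a simple set** (Lemma 6.15): removing the doubled
vertices of an `ε`-simple set `S` gives a simple set `S' = S ∖ P` with
`Φ(S') ≤ (Φ(S) + ε)/(1 − ε)`. Here `H` is an undirected weighted graph on the vertex
set `V × {1, 2}`, with `(v, false)` playing the role of `v₁` and `(v, true)` of `v₂`. -/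
theorem eps_simple_to_simple
    {V : Type*} [Fintype V] [DecidableEq V]
    (w : V × Bool → V × Bool → ℝ)
    (hsymm : ∀ x y, w x y = w y x)
    (hnonneg : ∀ x y, 0 ≤ w x y)
    (deg : V × Bool → ℝ) (hdeg : ∀ x, deg x = ∑ y, w x y)
    (S : Finset (V × Bool)) (hS : 0 < gVol deg S)
    (eps : ℝ) (heps0 : 0 ≤ eps) (heps1 : eps < 1)
    -- `P` consists of the pairs `u₁, u₂` that are both contained in `S`
    (P : Finset (V × Bool)) (hP : P = S.filter (fun x => (x.1, !x.2) ∈ S))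
    -- `S` is `ε`-simple
    (hsimple : gVol deg P ≤ eps * gVol deg S) :
    gCondVol w deg (S \ P) ≤ (gCondVol w deg S + eps) / (1 - eps) := by
  have hPS : P ⊆ S := by rw [hP]; exact filter_subset _ _
  set S' := S \ P with hS'
  have hvol : gVol deg S' = gVol deg S - gVol deg P := by
    have := Finset.sum_sdiff_eq_sub (f := deg) hPS
    simpa [gVol, hS'] using this
  have hvolS'ge : (1 - eps) * gVol deg S ≤ gVol deg S' := by
    rw [hvol]; nlinarith
  have hvolS'pos : 0 < gVol deg S' := by nlinarith
  have hcompl : S'ᶜ = Sᶜ ∪ P := by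
    ext x
    simp only [hS', mem_compl, mem_sdiff, mem_union]
    tauto
  have hdisj : Disjoint (Sᶜ : Finset (V × Bool)) P := by
    rw [Finset.disjoint_left]
    intro a ha hb
    exact (mem_compl.mp ha) (hPS hb)
  have hcut1 : gCut w S' Sᶜ ≤ gCut w S Sᶜ := by
    apply Finset.sum_le_sum_of_subset_of_nonneg (sdiff_subset)
    intro i _ _
    exact Finset.sum_nonneg fun j _ => hnonneg i j
  have hcut2 : gCut w S' P ≤ gVol deg P := by
    rw [gCut, Finset.sum_comm, gVol]
    apply Finset.sum_le_sum
    intro v _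
    calc ∑ u ∈ S', w u v ≤ ∑ u, w u v :=
          Finset.sum_le_sum_of_subset_of_nonneg (Finset.subset_univ _)
            (fun i _ _ => hnonneg i v)
      _ = ∑ u, w v u := by simp [hsymm]
      _ = deg v := (hdeg v).symm
  have hsplit : gCut w S' S'ᶜ = gCut w S' Sᶜ + gCut w S' P := by
    rw [hcompl, gCut, gCut, gCut, ← Finset.sum_add_distrib]
    exact Finset.sum_congr rfl fun u _ => Finset.sum_union hdisj
  have hcutS : gCut w S' S'ᶜ ≤ gCut w S Sᶜ + eps * gVol deg S := by
    rw [hsplit]; linarith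
  have hcutnn : 0 ≤ gCut w S Sᶜ :=
    Finset.sum_nonneg fun i _ => Finset.sum_nonneg fun j _ => hnonneg i j
  have h1e : 0 < 1 - eps := by linarith
  rw [gCondVol, gCondVol]
  calc gCut w S' S'ᶜ / gVol deg S'
      ≤ (gCut w S Sᶜ + eps * gVol deg S) / ((1 - eps) * gVol deg S) :=
        div_le_div₀ (by nlinarith) hcutS (by positivity) hvolS'ge
    _ = (gCut w S Sᶜ / gVol deg S + eps) / (1 - eps) := by
        field_simp
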